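/- Let x_1,…,x_{t-1} ∈ ℝ^d with ‖x_s‖₂ ≤ 1, Θ ⊂ ℝ^d with sup norm bound S, λ > 0, μ the sigmoid, and θ₁, θ₂ ∈ Θ. Define G_t(θ₁,θ₂) := Σ_s α(x_s, θ₁, θ₂) x_s x_sᵀ + λ I_d and H_t(θ₁) := Σ_s μ'(x_sᵀθ₁) x_s x_sᵀ + λ I_d, where α(x,θ₁,θ₂) = ∫₀¹ μ'(v xᵀθ₂ + (1-v) xᵀθ₁) dv. Then G_t(θ₁,θ₂) ⪰ (1+2S)^{-1} H_t(θ₁) in the positive semidefinite order. -/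

import Mathlib

open RealInnerProductSpace Matrix

noncomputable def sigmoid (x : ℝ) : ℝ := (1 + Real.exp (-x))⁻¹

lemma deriv_sigmoid (y : ℝ) : deriv sigmoid y = (2 + Real.exp y + Real.exp (-y))⁻¹ := by
  have hpos : (0:ℝ) < 1 + Real.exp (-y) := by positivity
  have h1 : HasDerivAt (fun t : ℝ => 1 + Real.exp (-t)) (-Real.exp (-y)) y := by
    simpa using (((Real.hasDerivAt_exp (-y)).comp y (hasDerivAt_neg y))).const_add 1
  have h2 := h1.inv hpos.ne'
  rw [show sigmoid = (fun t : ℝ => 1 + Real.exp (-t))⁻¹ from rfl, h2.deriv]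
  rw [Real.exp_neg]
  have := Real.exp_pos y
  field_simp
  ring

lemma deriv_sigmoid_pos (y : ℝ) : 0 < deriv sigmoid y := by
  rw [deriv_sigmoid]; positivity

lemma continuous_deriv_sigmoid : Continuous (deriv sigmoid) := by
  have : deriv sigmoid = fun y => (2 + Real.exp y + Real.exp (-y))⁻¹ :=
    funext deriv_sigmoid
  rw [this]
  refine Continuous.inv₀ (by fun_prop) fun y => by positivity

lemma deriv_sigmoid_ratio (b u : ℝ) :
    Real.exp (-|u|) * deriv sigmoid b ≤ deriv sigmoid (b + u) := by
  rw [deriv_sigmoid, deriv_sigmoid, Real.exp_neg, ← mul_inv]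
  have hbu : (0:ℝ) < 2 + Real.exp (b + u) + Real.exp (-(b + u)) := by positivity
  have hb : (0:ℝ) < Real.exp |u| * (2 + Real.exp b + Real.exp (-b)) := by positivity
  rw [inv_le_inv₀ hb hbu]
  have h1 : Real.exp (b + u) ≤ Real.exp |u| * Real.exp b := by
    rw [← Real.exp_add]; exact Real.exp_le_exp.mpr (by cases abs_cases u <;> linarith)
  have h2 : Real.exp (-(b + u)) ≤ Real.exp |u| * Real.exp (-b) := by
    rw [← Real.exp_add]; exact Real.exp_le_exp.mpr (by cases abs_cases u <;> linarith)
  have h3 : (1:ℝ) ≤ Real.exp |u| := Real.one_le_exp (abs_nonneg u)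
  nlinarith [Real.exp_pos b, Real.exp_pos (-b)]

lemma exp_integral_lb (r : ℝ) (hr : 0 ≤ r) :
    (1 + r)⁻¹ ≤ ∫ v in (0:ℝ)..1, Real.exp (-(r * v)) := by
  rcases hr.eq_or_lt with h | h
  · simp [← h]
  · have hcalc : ∫ v in (0:ℝ)..1, Real.exp (-(r * v)) = (1 - Real.exp (-r)) / r := by
      have : ∀ v : ℝ, Real.exp (-(r * v)) = Real.exp (-r * v) := by intro v; ring_nf
      simp_rw [this]
      rw [intervalIntegral.integral_comp_mul_left Real.exp (by linarith : (-r) ≠ 0)]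
      have hr' : r ≠ 0 := h.ne'
      simp [integral_exp]
      ring
    rw [hcalc]
    rw [le_div_iff₀ h, inv_mul_eq_div, div_le_iff₀ (by linarith : (0:ℝ) < 1 + r)]
    have h4 : 1 + r ≤ Real.exp r := by linarith [Real.add_one_le_exp r]
    have h5 : Real.exp (-r) * Real.exp r = 1 := by rw [← Real.exp_add]; simp
    nlinarith [Real.exp_pos (-r)]

lemma sigmoid_core (S : ℝ) (hS : 0 < S) (a b : ℝ) (hab : |a - b| ≤ 2 * S) :
    (1 + 2 * S)⁻¹ * deriv sigmoid b ≤
      ∫ v in (0:ℝ)..1, deriv sigmoid (v * a + (1 - v) * b) := by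
  set r := |a - b| with hr
  have hr0 : 0 ≤ r := abs_nonneg _
  have hμ := (deriv_sigmoid_pos b).le
  have int1 : IntervalIntegrable (fun v => Real.exp (-(r * v)) * deriv sigmoid b)
      MeasureTheory.volume 0 1 := (by fun_prop : Continuous fun v : ℝ =>
        Real.exp (-(r * v)) * deriv sigmoid b).intervalIntegrable _ _
  have int2 : IntervalIntegrable (fun v => deriv sigmoid (v * a + (1 - v) * b))
      MeasureTheory.volume 0 1 :=
    (continuous_deriv_sigmoid.comp (by fun_prop)).intervalIntegrable _ _
  have step1 : ∫ v in (0:ℝ)..1, Real.exp (-(r * v)) * deriv sigmoid b ≤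
      ∫ v in (0:ℝ)..1, deriv sigmoid (v * a + (1 - v) * b) := by
    apply intervalIntegral.integral_mono_on (by norm_num) int1 int2
    intro v hv
    have hv0 : 0 ≤ v := hv.1
    have key := deriv_sigmoid_ratio b (v * (a - b))
    have habs : |v * (a - b)| = r * v := by
      rw [abs_mul, abs_of_nonneg hv0, hr]; ring
    rw [habs] at key
    calc Real.exp (-(r * v)) * deriv sigmoid b ≤ deriv sigmoid (b + v * (a - b)) := key
      _ = deriv sigmoid (v * a + (1 - v) * b) := by ring_nf
  have step2 : (1 + 2 * S)⁻¹ * deriv sigmoid b ≤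
      ∫ v in (0:ℝ)..1, Real.exp (-(r * v)) * deriv sigmoid b := by
    rw [intervalIntegral.integral_mul_const]
    apply mul_le_mul_of_nonneg_right _ hμ
    calc (1 + 2 * S)⁻¹ ≤ (1 + r)⁻¹ := by
          apply inv_anti₀ (by linarith) (by linarith)
      _ ≤ _ := exp_integral_lb r hr0
  linarith

lemma psd_smul_vecMulVec {d : ℕ} (c : ℝ) (hc : 0 ≤ c) (v : EuclideanSpace ℝ (Fin d)) :
    (c • Matrix.vecMulVec v v).PosSemidef := by
  refine Matrix.PosSemidef.of_dotProduct_mulVec_nonneg ?_ ?_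
  · unfold Matrix.IsHermitian
    ext i j
    simp [Matrix.vecMulVec_apply, mul_comm]
  · intro y
    have : dotProduct (star y) ((c • Matrix.vecMulVec v v) *ᵥ y)
        = c * (∑ i, v i * y i) ^ 2 := by
      simp only [Matrix.mulVec, dotProduct, Matrix.smul_apply,
        Matrix.vecMulVec_apply, star_trivial, smul_eq_mul, sq, Finset.mul_sum,
        Finset.sum_mul]
      exact Finset.sum_congr rfl fun i _ => Finset.sum_congr rfl fun j _ => by ring
    rw [this]
    positivity

lemma psd_smul_one {d : ℕ} (c : ℝ) (hc : 0 ≤ c) :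
    (c • (1 : Matrix (Fin d) (Fin d) ℝ)).PosSemidef := by
  rw [show c • (1 : Matrix (Fin d) (Fin d) ℝ) = Matrix.diagonal (fun _ => c) by
    ext i j; by_cases h : i = j <;> simp [Matrix.one_apply, h]]
  exact Matrix.PosSemidef.diagonal (fun _ => hc)

lemma psd_sum {d : ℕ} (f : ℕ → Matrix (Fin d) (Fin d) ℝ) (s : Finset ℕ)
    (h : ∀ i ∈ s, (f i).PosSemidef) : (∑ i ∈ s, f i).PosSemidef := by
  classical
  induction s using Finset.induction with
  | empty => simp [Matrix.PosSemidef.zero]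
  | insert _ _ hni ih =>
    rw [Finset.sum_insert hni]
    exact (h _ (Finset.mem_insert_self _ _)).add
      (ih fun i hi => h i (Finset.mem_insert_of_mem hi))

theorem Gt_loewner_ge_Ht {d n : ℕ} (Θ : Set (EuclideanSpace ℝ (Fin d)))
    (S : ℝ) (hS : 0 < S) (hΘ : ∀ θ ∈ Θ, ‖θ‖ ≤ S)
    (x : ℕ → EuclideanSpace ℝ (Fin d)) (hx : ∀ s, ‖x s‖ ≤ 1)
    (lam : ℝ) (hlam : 0 < lam)
    (θ₁ θ₂ : EuclideanSpace ℝ (Fin d)) (hθ₁ : θ₁ ∈ Θ) (hθ₂ : θ₂ ∈ Θ)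
    (G H : Matrix (Fin d) (Fin d) ℝ)
    (hG : G = (∑ s ∈ Finset.Icc 1 n,
        (∫ v in (0:ℝ)..1, deriv sigmoid (v * ⟪x s, θ₂⟫ + (1 - v) * ⟪x s, θ₁⟫)) •
          Matrix.vecMulVec (x s) (x s)) + lam • (1 : Matrix (Fin d) (Fin d) ℝ))
    (hH : H = (∑ s ∈ Finset.Icc 1 n,
        deriv sigmoid ⟪x s, θ₁⟫ • Matrix.vecMulVec (x s) (x s))
          + lam • (1 : Matrix (Fin d) (Fin d) ℝ)) :
    (G - (1 + 2 * S)⁻¹ • H).PosSemidef := by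
  set c : ℝ := (1 + 2 * S)⁻¹ with hc
  have hc0 : 0 ≤ c := by positivity
  have hc1 : c ≤ 1 := by
    rw [hc, inv_le_one_iff₀]
    right; linarith
  have key : G - c • H =
      (∑ s ∈ Finset.Icc 1 n,
        ((∫ v in (0:ℝ)..1, deriv sigmoid (v * ⟪x s, θ₂⟫ + (1 - v) * ⟪x s, θ₁⟫))
          - c * deriv sigmoid ⟪x s, θ₁⟫) • Matrix.vecMulVec (x s) (x s))
      + ((1 - c) * lam) • (1 : Matrix (Fin d) (Fin d) ℝ) := by
    subst hG hH
    simp only [smul_add, Finset.smul_sum, smul_smul, sub_smul, Finset.sum_sub_distrib]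
    module
  rw [key]
  apply Matrix.PosSemidef.add
  · apply psd_sum
    intro s hs
    apply psd_smul_vecMulVec
    have hbound : |⟪x s, θ₂⟫ - ⟪x s, θ₁⟫| ≤ 2 * S := by
      rw [← inner_sub_right]
      calc |⟪x s, θ₂ - θ₁⟫| ≤ ‖x s‖ * ‖θ₂ - θ₁‖ := abs_real_inner_le_norm _ _
        _ ≤ 1 * (‖θ₂‖ + ‖θ₁‖) :=
          mul_le_mul (hx s) (norm_sub_le _ _) (norm_nonneg _) zero_le_one
        _ ≤ 2 * S := by
          have := hΘ θ₁ hθ₁; have := hΘ θ₂ hθ₂; linarith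
    have := sigmoid_core S hS ⟪x s, θ₂⟫ ⟪x s, θ₁⟫ hbound
    linarith
  · exact psd_smul_one _ (by nlinarith)
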